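/- Let R be a ring and A a right ideal of R. Let A = A_1⋯A_n and A = B_1⋯B_m be two serial factorizations of A. Then n = m and there exists a unique permutation σ of {1, …, n} such that A_i = B_{σ(i)} for every i = 1, …, n. Moreover, when n ≥ 2, all the right ideals A_1, …, A_n and the right ideal A are two-sided, the map r + A ↦ (r + A_1, …, r + A_n) is a ring isomorphism from R/A onto the ring direct product R/A_1 × ⋯ × R/A_n, and every R/A_i is a right chain ring. -/

import Mathlib

open MulOpposite

universe u

/-- The product `A·B` of two right ideals of `R` (right ideals are `Rᵐᵒᵖ`-submodules of `R`):
the set of all finite sums of products `a * b` with `a ∈ A`, `b ∈ B`. -/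
def rmul {R : Type u} [Ring R] (A B : Submodule Rᵐᵒᵖ R) : Submodule Rᵐᵒᵖ R :=
  Submodule.span Rᵐᵒᵖ {x : R | ∃ a ∈ A, ∃ b ∈ B, x = a * b}

/-- The product `A₁⋯Aₙ` of a (possibly empty) list of right ideals. -/
def rprod {R : Type u} [Ring R] : List (Submodule Rᵐᵒᵖ R) → Submodule Rᵐᵒᵖ R
  | [] => ⊤
  | [A] => A
  | A :: l => rmul A (rprod l)

/-- A finite family of right ideals is coindependent if `Aᵢ + ⋂_{j ≠ i} Aⱼ = R` for every `i`. -/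
def Coindep {R : Type u} [Ring R] {n : ℕ} (A : Fin n → Submodule Rᵐᵒᵖ R) : Prop :=
  ∀ i, A i ⊔ (⨅ j, ⨅ (_ : j ≠ i), A j) = ⊤

/-- A module is uniserial if its submodules are linearly ordered by inclusion. -/
def IsUniserialMod (S : Type*) [Ring S] (M : Type*) [AddCommGroup M] [Module S M] : Prop :=
  ∀ N P : Submodule S M, N ≤ P ∨ P ≤ N

/-- A right ideal is a two-sided ideal if it is also closed under left multiplication. -/
def IsTwoSidedRid {R : Type u} [Ring R] (A : Submodule Rᵐᵒᵖ R) : Prop :=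
  ∀ (r : R), ∀ x ∈ A, r * x ∈ A

/-- A serial factorization of a right ideal `A`: a factorization `A = A₁⋯Aₙ` into proper
right ideals that pairwise commute, form a coindependent family, and are such that every
quotient `R/Aᵢ` is a uniserial right `R`-module. -/
def IsSerialFact {R : Type u} [Ring R] {n : ℕ} (A : Submodule Rᵐᵒᵖ R)
    (F : Fin n → Submodule Rᵐᵒᵖ R) : Prop :=
  (∀ i, F i ≠ ⊤) ∧ (∀ i j, rmul (F i) (F j) = rmul (F j) (F i)) ∧ Coindep F ∧
    (∀ i, IsUniserialMod Rᵐᵒᵖ (R ⧸ F i)) ∧ A = rprod (List.ofFn F)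

/-- A right ideal has a serial factorization if it admits one of some length. -/
def HasSerialFact {R : Type u} [Ring R] (A : Submodule Rᵐᵒᵖ R) : Prop :=
  ∃ (n : ℕ) (F : Fin n → Submodule Rᵐᵒᵖ R), IsSerialFact A F

/-- A right chain ring: its right ideals are linearly ordered by inclusion. -/
def IsRightChainRing (R : Type u) [Ring R] : Prop :=
  ∀ A B : Submodule Rᵐᵒᵖ R, A ≤ B ∨ B ≤ A

/-- A ring is right duo if every right ideal is a two-sided ideal. -/
def IsRightDuo (R : Type u) [Ring R] : Prop :=
  ∀ A : Submodule Rᵐᵒᵖ R, IsTwoSidedRid A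

/-- The principal right ideal `rR`. -/
def rspan {R : Type u} [Ring R] (r : R) : Submodule Rᵐᵒᵖ R :=
  Submodule.span Rᵐᵒᵖ ({r} : Set R)

variable {R : Type u} [Ring R]

theorem mul_mem_rmul {A B : Submodule Rᵐᵒᵖ R} {a b : R} (ha : a ∈ A) (hb : b ∈ B) :
    a * b ∈ rmul A B :=
  Submodule.subset_span ⟨a, ha, b, hb, rfl⟩

theorem rmul_le {A B C : Submodule Rᵐᵒᵖ R} (h : ∀ a ∈ A, ∀ b ∈ B, a * b ∈ C) :
    rmul A B ≤ C := by
  apply Submodule.span_le.2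
  rintro x ⟨a, ha, b, hb, rfl⟩
  exact h a ha b hb

theorem rmul_le_left {A B : Submodule Rᵐᵒᵖ R} : rmul A B ≤ A :=
  rmul_le fun a ha b _ => by
    simpa [op_smul_eq_mul] using A.smul_mem (op b) ha

theorem rmul_induction {A B : Submodule Rᵐᵒᵖ R} {x : R} (hx : x ∈ rmul A B)
    {P : R → Prop} (Hgen : ∀ a ∈ A, ∀ b ∈ B, P (a * b)) (H0 : P 0)
    (Hadd : ∀ y z, P y → P z → P (y + z)) : P x := by
  let S : Set R := {x : R | ∃ a ∈ A, ∃ b ∈ B, x = a * b}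
  let T : Submodule Rᵐᵒᵖ R :=
    { carrier := AddSubmonoid.closure S
      add_mem' := fun h1 h2 => AddSubmonoid.add_mem _ h1 h2
      zero_mem' := AddSubmonoid.zero_mem _
      smul_mem' := by
        intro r x hx
        change x * unop r ∈ AddSubmonoid.closure S
        refine AddSubmonoid.closure_induction
          (motive := fun y _ => y * unop r ∈ AddSubmonoid.closure S) ?_ ?_ ?_ hx
        · rintro y ⟨a, ha, b, hb, rfl⟩
          exact AddSubmonoid.subset_closure ⟨a, ha, b * unop r, B.smul_mem r hb, (mul_assoc ..)⟩
        · simpa using AddSubmonoid.zero_mem (AddSubmonoid.closure S)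
        · intro y z _ _ hy hz
          simpa [add_mul] using AddSubmonoid.add_mem _ hy hz }
  have hT : rmul A B ≤ T := Submodule.span_le.2 AddSubmonoid.subset_closure
  refine AddSubmonoid.closure_induction (motive := fun y _ => P y) ?_ H0
    (fun y z _ _ hy hz => Hadd y z hy hz) (hT hx)
  rintro y ⟨a, ha, b, hb, rfl⟩
  exact Hgen a ha b hb

theorem rmul_assoc (A B C : Submodule Rᵐᵒᵖ R) :
    rmul (rmul A B) C = rmul A (rmul B C) := by
  apply le_antisymm
  · refine rmul_le fun x hx c hc => ?_
    refine rmul_induction (P := fun y => y * c ∈ rmul A (rmul B C)) hx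
      (fun a ha b hb => ?_) (by simp) (fun y z hy hz => ?_)
    · show a * b * c ∈ _
      rw [mul_assoc]; exact mul_mem_rmul ha (mul_mem_rmul hb hc)
    · show (y + z) * c ∈ _
      rw [add_mul]; exact Submodule.add_mem _ hy hz
  · refine rmul_le fun a ha x hx => ?_
    refine rmul_induction (P := fun y => a * y ∈ rmul (rmul A B) C) hx
      (fun b hb c hc => ?_) (by simp) (fun y z hy hz => ?_)
    · show a * (b * c) ∈ _
      rw [← mul_assoc]; exact mul_mem_rmul (mul_mem_rmul ha hb) hc
    · show a * (y + z) ∈ _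
      rw [mul_add]; exact Submodule.add_mem _ hy hz

theorem rmul_top (A : Submodule Rᵐᵒᵖ R) : rmul A ⊤ = A := by
  apply le_antisymm rmul_le_left
  intro a ha
  simpa using mul_mem_rmul ha (Submodule.mem_top (x := (1:R)))

theorem rprod_nil : rprod ([] : List (Submodule Rᵐᵒᵖ R)) = ⊤ := rfl

theorem rprod_cons (A : Submodule Rᵐᵒᵖ R) (l : List (Submodule Rᵐᵒᵖ R)) :
    rprod (A :: l) = rmul A (rprod l) := by
  cases l with
  | nil => exact (rmul_top A).symm
  | cons B l' => rfl

theorem rprod_comm (l : List (Submodule Rᵐᵒᵖ R)) (A C : Submodule Rᵐᵒᵖ R)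
    (hA : rmul C A = rmul A C) (h : ∀ X ∈ l, rmul C X = rmul X C) :
    rmul C (rprod (A :: l)) = rmul (rprod (A :: l)) C := by
  induction l generalizing A with
  | nil => exact hA
  | cons B l' ih =>
    have hP := ih B (h B (by simp)) (fun X hX => h X (by simp [hX]))
    rw [rprod_cons A (B :: l'), ← rmul_assoc, hA, rmul_assoc, hP, ← rmul_assoc]

theorem rmul_eq_inf {A B : Submodule Rᵐᵒᵖ R} (htop : A ⊔ B = ⊤)
    (hc : rmul A B = rmul B A) : rmul A B = A ⊓ B := by
  apply le_antisymm
  · exact le_inf rmul_le_left (hc ▸ rmul_le_left)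
  · intro x hx
    obtain ⟨a, ha, b, hb, hab⟩ := Submodule.mem_sup.1 (htop ▸ Submodule.mem_top (x := (1:R)))
    have : x = a * x + b * x := by rw [← add_mul, hab, one_mul]
    rw [this]
    exact Submodule.add_mem _ (mul_mem_rmul ha hx.2) (hc ▸ mul_mem_rmul hb hx.1)

theorem coindep_sup_top {n : ℕ} {F : Fin n → Submodule Rᵐᵒᵖ R} (hF : Coindep F)
    {i j : Fin n} (hij : j ≠ i) : F i ⊔ F j = ⊤ := by
  have := hF i
  rw [eq_top_iff, ← this]
  exact sup_le_sup le_rfl (le_trans (iInf_le _ j) (iInf_le _ hij))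

theorem coindep_decomp {n : ℕ} {F : Fin n → Submodule Rᵐᵒᵖ R} (hF : Coindep F) (i : Fin n) :
    ∃ f ∈ F i, ∃ e ∈ (⨅ j, ⨅ (_ : j ≠ i), F j), f + e = 1 := by
  obtain ⟨f, hf, e, he, hfe⟩ := Submodule.mem_sup.1 ((hF i) ▸ Submodule.mem_top (x := (1:R)))
  exact ⟨f, hf, e, he, hfe⟩

theorem coindep_le_ne {n : ℕ} {F : Fin n → Submodule Rᵐᵒᵖ R} (hF : Coindep F)
    (hproper : ∀ i, F i ≠ ⊤) {i j : Fin n} (hij : j ≠ i) (hle : F j ≤ F i) : False := by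
  have : F i ⊔ F j = F i := sup_eq_left.2 hle
  exact hproper i (by rw [← coindep_sup_top hF hij, this])

theorem coindep_inj {n : ℕ} {F : Fin n → Submodule Rᵐᵒᵖ R} (hF : Coindep F)
    (hproper : ∀ i, F i ≠ ⊤) : Function.Injective F := by
  intro i j hij
  by_contra hne
  exact coindep_le_ne hF hproper (Ne.symm hne) (le_of_eq (hij.symm))

theorem iInf_ne_zero_eq {k : ℕ} (F : Fin (k + 1) → Submodule Rᵐᵒᵖ R) :
    (⨅ j, ⨅ (_ : j ≠ (0 : Fin (k+1))), F j) = ⨅ i : Fin k, F i.succ := by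
  apply le_antisymm
  · exact le_iInf fun i => le_trans (iInf_le _ i.succ) (iInf_le _ (Fin.succ_ne_zero i))
  · refine le_iInf fun j => le_iInf fun hj => ?_
    obtain ⟨i, rfl⟩ := Fin.exists_succ_eq.2 hj
    exact iInf_le _ i

theorem iInf_fin_succ_eq {k : ℕ} (F : Fin (k + 1) → Submodule Rᵐᵒᵖ R) :
    (⨅ j, F j) = F 0 ⊓ ⨅ i : Fin k, F i.succ := by
  apply le_antisymm
  · exact le_inf (iInf_le _ 0) (le_iInf fun i => iInf_le _ i.succ)
  · refine le_iInf fun j => ?_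
    rcases Fin.eq_zero_or_eq_succ j with rfl | ⟨i, rfl⟩
    · exact inf_le_left
    · exact le_trans inf_le_right (iInf_le _ i)

theorem coindep_tail {k : ℕ} {F : Fin (k + 1) → Submodule Rᵐᵒᵖ R} (hF : Coindep F) :
    Coindep (fun i : Fin k => F i.succ) := by
  intro i
  rw [eq_top_iff, ← hF i.succ]
  refine sup_le_sup le_rfl (le_iInf fun j => le_iInf fun hj => ?_)
  exact le_trans (iInf_le _ j.succ) (iInf_le _ (fun h => hj (Fin.succ_injective _ h)))

theorem rprod_eq_iInf {n : ℕ} {F : Fin n → Submodule Rᵐᵒᵖ R} (hF : Coindep F)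
    (hcomm : ∀ i j, rmul (F i) (F j) = rmul (F j) (F i)) :
    rprod (List.ofFn F) = ⨅ i, F i := by
  induction n with
  | zero =>
    rw [show List.ofFn F = [] from List.ofFn_zero .., rprod_nil, iInf_of_empty]
  | succ k ih =>
    have hofn : List.ofFn F = F 0 :: List.ofFn (fun i : Fin k => F i.succ) := by
      simp [List.ofFn_succ]
    have hP : rprod (List.ofFn (fun i : Fin k => F i.succ)) = ⨅ i : Fin k, F i.succ :=
      ih (coindep_tail hF) (fun i j => hcomm i.succ j.succ)
    rw [hofn, rprod_cons]
    cases k with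
    | zero =>
      rw [iInf_fin_succ_eq, iInf_of_empty, inf_top_eq]
      simp only [List.ofFn_zero]
      exact rmul_top (F 0)
    | succ k' =>
      have hcommP : rmul (F 0) (rprod (List.ofFn (fun i : Fin (k'+1) => F i.succ)))
          = rmul (rprod (List.ofFn (fun i : Fin (k'+1) => F i.succ))) (F 0) := by
        rw [List.ofFn_succ]
        refine rprod_comm _ _ _ (hcomm 0 _) fun X hX => ?_
        obtain ⟨i, rfl⟩ : ∃ i, X = F i := by
          rw [List.mem_ofFn] at hX
          obtain ⟨i, rfl⟩ := hX
          exact ⟨_, rfl⟩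
        exact hcomm 0 i
      have hsup : F 0 ⊔ rprod (List.ofFn (fun i : Fin (k'+1) => F i.succ)) = ⊤ := by
        rw [hP, ← iInf_ne_zero_eq]
        exact hF 0
      rw [rmul_eq_inf hsup hcommP, hP, ← iInf_fin_succ_eq]

theorem twoSided_of_pair {A B : Submodule Rᵐᵒᵖ R} (htop : A ⊔ B = ⊤)
    (hc : rmul A B = rmul B A) : IsTwoSidedRid A := by
  intro r x hx
  obtain ⟨a, ha, b, hb, hab⟩ := Submodule.mem_sup.1 (htop ▸ Submodule.mem_top (x := r))
  have : r * x = a * x + b * x := by rw [← add_mul, hab]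
  rw [this]
  refine Submodule.add_mem _ (by simpa [op_smul_eq_mul] using A.smul_mem (op x) ha) ?_
  exact rmul_le_left (hc ▸ mul_mem_rmul hb hx)

theorem twoSided_inf {ι : Sort*} {F : ι → Submodule Rᵐᵒᵖ R}
    (h : ∀ i, IsTwoSidedRid (F i)) : IsTwoSidedRid (⨅ i, F i) := by
  intro r x hx
  rw [Submodule.mem_iInf] at *
  exact fun i => h i r x (hx i)

theorem twoSided_iInf₂ {n : ℕ} {F : Fin n → Submodule Rᵐᵒᵖ R}
    (h : ∀ i, IsTwoSidedRid (F i)) (i : Fin n) :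
    IsTwoSidedRid (⨅ j, ⨅ (_ : j ≠ i), F j) := by
  intro r x hx
  simp only [Submodule.mem_iInf] at *
  exact fun j hj => h j r x (hx j hj)

theorem coindep_twoSided {n : ℕ} (hn : 2 ≤ n) {F : Fin n → Submodule Rᵐᵒᵖ R}
    (hF : Coindep F) (hcomm : ∀ i j, rmul (F i) (F j) = rmul (F j) (F i)) (i : Fin n) :
    IsTwoSidedRid (F i) := by
  obtain ⟨j, hj⟩ : ∃ j : Fin n, j ≠ i := by
    rcases eq_or_ne i ⟨0, by omega⟩ with rfl | h
    · exact ⟨⟨1, by omega⟩, by simp [Fin.ext_iff]⟩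
    · exact ⟨⟨0, by omega⟩, fun hh => h hh.symm⟩
  exact twoSided_of_pair (coindep_sup_top hF hj) (hcomm i j)

/-- The interval `[K, ⊤]` is a chain when `R ⧸ K` is uniserial. -/
theorem interval_chain {K : Submodule Rᵐᵒᵖ R} (hu : IsUniserialMod Rᵐᵒᵖ (R ⧸ K))
    {C D : Submodule Rᵐᵒᵖ R} (hC : K ≤ C) (hD : K ≤ D) : C ≤ D ∨ D ≤ C := by
  have key : ∀ C D : Submodule Rᵐᵒᵖ R, K ≤ D →
      Submodule.map K.mkQ C ≤ Submodule.map K.mkQ D → C ≤ D := by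
    intro C D hKD hmap x hx
    obtain ⟨d, hd, hdx⟩ := hmap ⟨x, hx, rfl⟩
    have : x - d ∈ K := by
      rw [← Submodule.Quotient.eq]
      exact hdx.symm
    simpa using D.add_mem hd (hKD this)
  rcases hu (Submodule.map K.mkQ C) (Submodule.map K.mkQ D) with h | h
  · exact Or.inl (key C D hD h)
  · exact Or.inr (key D C hC h)

theorem inf_compl_le {n : ℕ} (F : Fin n → Submodule Rᵐᵒᵖ R) (k : Fin n) :
    F k ⊓ (⨅ j, ⨅ (_ : j ≠ k), F j) ≤ ⨅ j, F j := by
  refine le_iInf fun j => ?_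
  rcases eq_or_ne j k with rfl | hj
  · exact inf_le_left
  · exact le_trans inf_le_right (le_trans (iInf_le _ j) (iInf_le _ hj))

set_option maxHeartbeats 1000000 in
theorem exists_factor_le {n : ℕ} {F : Fin n → Submodule Rᵐᵒᵖ R} (hproper : ∀ i, F i ≠ ⊤)
    (hF : Coindep F) (hcomm : ∀ i j, rmul (F i) (F j) = rmul (F j) (F i))
    {B : Submodule Rᵐᵒᵖ R} (hAB : (⨅ i, F i) ≤ B) (hBne : B ≠ ⊤)
    (hchain : ∀ C D : Submodule Rᵐᵒᵖ R, B ≤ C → B ≤ D → C ≤ D ∨ D ≤ C) :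
    ∃ i, F i ≤ B := by
  rcases Nat.lt_or_ge n 2 with h2 | hn
  · match n, F, hproper, hF, hAB, h2 with
    | 0, F, hproper, hF, hAB, h2 =>
      exact absurd (eq_top_iff.2 (le_trans (le_of_eq (iInf_of_empty F).symm) hAB)) hBne
    | 1, F, hproper, hF, hAB, h2 =>
      exact ⟨0, le_trans (le_iInf fun j => le_of_eq (congrArg F (Subsingleton.elim 0 j))) hAB⟩
  · have hts : ∀ i, IsTwoSidedRid (F i) := coindep_twoSided hn hF hcomm
    have htsD : ∀ i, IsTwoSidedRid (⨅ j, ⨅ (_ : j ≠ i), F j) := twoSided_iInf₂ hts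
    have htsA : IsTwoSidedRid (⨅ j, F j) := twoSided_inf hts
    choose f hf e he hfe using coindep_decomp hF
    have hone : (1 - ∑ k, e k) ∈ ⨅ j, F j := by
      rw [Submodule.mem_iInf]
      intro i
      have : (1 : R) - ∑ k, e k = f i - ∑ k ∈ Finset.univ.erase i, e k := by
        rw [← Finset.add_sum_erase _ e (Finset.mem_univ i), ← hfe i]
        abel
      rw [this]
      refine Submodule.sub_mem _ (hf i) (Submodule.sum_mem _ fun j hj => ?_)
      have hji : j ≠ i := (Finset.mem_erase.1 hj).1
      have := he j
      simp only [Submodule.mem_iInf] at this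
      exact this i (fun h => hji h.symm)
    by_cases hall : ∀ i, B ⊔ F i = ⊤
    · exfalso
      have heB : ∀ i, e i ∈ B := by
        intro i
        obtain ⟨b, hb, g, hg, hbg⟩ :=
          Submodule.mem_sup.1 ((hall i) ▸ Submodule.mem_top (x := (1:R)))
        have : e i = b * e i + g * e i := by rw [← add_mul, hbg, one_mul]
        rw [this]
        refine Submodule.add_mem _
          (by simpa [op_smul_eq_mul] using B.smul_mem (op (e i)) hb) ?_
        refine hAB (inf_compl_le F i ?_)
        exact ⟨by simpa [op_smul_eq_mul] using (F i).smul_mem (op (e i)) hg, htsD i g _ (he i)⟩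
      have h1B : (1 : R) ∈ B := by
        have h1 : (1 : R) = (∑ k, e k) + (1 - ∑ k, e k) := by abel
        rw [h1]
        exact Submodule.add_mem _ (Submodule.sum_mem _ fun j _ => heB j) (hAB hone)
      exact hBne (Submodule.eq_top_iff'.2 fun x => by
        simpa using B.smul_mem (op x) h1B)
    · push_neg at hall
      obtain ⟨i0, hi0⟩ := hall
      have hsup : ∀ k, k ≠ i0 → B ⊔ F k = ⊤ := by
        intro k hk
        have htot : (B ⊔ F k) ⊔ (B ⊔ F i0) = ⊤ := by
          rw [eq_top_iff, ← coindep_sup_top hF hk]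
          exact sup_le (le_trans le_sup_right le_sup_right) (le_trans le_sup_right le_sup_left)
        rcases hchain (B ⊔ F k) (B ⊔ F i0) le_sup_left le_sup_left with h | h
        · exact absurd (by rw [← htot, sup_eq_right.2 h]) hi0
        · rw [← htot, sup_eq_left.2 h]
      refine ⟨i0, fun x hx => ?_⟩
      have hterm : ∀ k, x * e k ∈ B := by
        intro k
        rcases eq_or_ne k i0 with rfl | hk
        · refine hAB (inf_compl_le F k ?_)
          exact ⟨by simpa [op_smul_eq_mul] using (F k).smul_mem (op (e k)) hx,
            htsD k x _ (he k)⟩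
        · obtain ⟨b, hb, g, hg, hbg⟩ :=
            Submodule.mem_sup.1 ((hsup k hk) ▸ Submodule.mem_top (x := (1:R)))
          have : x * e k = b * (x * e k) + g * (x * e k) := by
            rw [← add_mul, hbg, one_mul]
          rw [this]
          refine Submodule.add_mem _
            (by simpa [op_smul_eq_mul] using B.smul_mem (op (x * e k)) hb) ?_
          refine hAB (inf_compl_le F k ?_)
          refine ⟨by simpa [op_smul_eq_mul] using (F k).smul_mem (op (x * e k)) hg, ?_⟩
          exact htsD k g _ (htsD k x _ (he k))
      have hx' : x = (∑ k, x * e k) + x * (1 - ∑ k, e k) := by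
        rw [← Finset.mul_sum, ← mul_add]
        simp
      rw [hx']
      exact Submodule.add_mem _ (Submodule.sum_mem _ fun j _ => hterm j)
        (hAB (htsA x _ hone))

theorem factor_matches {n m : ℕ} {F : Fin n → Submodule Rᵐᵒᵖ R} {G : Fin m → Submodule Rᵐᵒᵖ R}
    (hFp : ∀ i, F i ≠ ⊤) (hFc : Coindep F)
    (hFu : ∀ i, IsUniserialMod Rᵐᵒᵖ (R ⧸ F i))
    (hGp : ∀ j, G j ≠ ⊤) (hGc : Coindep G)
    (hGcomm : ∀ i j, rmul (G i) (G j) = rmul (G j) (G i))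
    (hGu : ∀ j, IsUniserialMod Rᵐᵒᵖ (R ⧸ G j))
    (hFGinf : (⨅ i, F i) = ⨅ j, G j)
    (hFcomm : ∀ i j, rmul (F i) (F j) = rmul (F j) (F i)) :
    ∀ i, ∃ j, F i = G j := by
  intro i
  obtain ⟨j, hj⟩ := exists_factor_le hGp hGc hGcomm
    (B := F i) (hFGinf ▸ iInf_le F i) (hFp i)
    (fun C D hC hD => interval_chain (hFu i) hC hD)
  obtain ⟨i', hi'⟩ := exists_factor_le hFp hFc hFcomm
    (B := G j) (hFGinf.symm ▸ iInf_le G j) (hGp j)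
    (fun C D hC hD => interval_chain (hGu j) hC hD)
  have hii : i' = i := by
    by_contra hne
    exact coindep_le_ne hFc hFp hne (le_trans hi' hj)
  exact ⟨j, le_antisymm (hii ▸ hi') hj |>.symm ▸ rfl⟩

/-- The ring congruence attached to a two-sided right ideal. -/
def ridCon (A : Submodule Rᵐᵒᵖ R) (hA : IsTwoSidedRid A) : RingCon R where
  r a b := a - b ∈ A
  iseqv := ⟨fun a => by simp, fun {a b} h => by simpa using A.neg_mem h,
    fun {a b c} h1 h2 => by simpa using A.add_mem h1 h2⟩
  add' {w x y z} h1 h2 := by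
    show w + y - (x + z) ∈ A
    have : w + y - (x + z) = (w - x) + (y - z) := by abel
    rw [this]; exact A.add_mem h1 h2
  mul' {w x y z} h1 h2 := by
    show w * y - x * z ∈ A
    have : w * y - x * z = w * (y - z) + (w - x) * z := by
      rw [mul_sub, sub_mul]; abel
    rw [this]
    refine A.add_mem (hA w _ h2) ?_
    simpa [op_smul_eq_mul] using A.smul_mem (op z) h1

theorem ridCon_rel {A : Submodule Rᵐᵒᵖ R} (hA : IsTwoSidedRid A) (a b : R) :
    ridCon A hA a b ↔ a - b ∈ A := Iff.rfl

theorem ridCon_coe_zero {A : Submodule Rᵐᵒᵖ R} (hA : IsTwoSidedRid A) {x : R} (hx : x ∈ A) :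
    (x : (ridCon A hA).Quotient) = 0 := by
  have h0 : ((0 : R) : (ridCon A hA).Quotient) = 0 := rfl
  rw [← h0]
  exact (RingCon.eq _).2 (show x - 0 ∈ A by simpa using hx)

/-- Pull back a right ideal of the quotient ring to a right ideal of `R`. -/
def pullSub (c : RingCon R) (A' : Submodule c.Quotientᵐᵒᵖ c.Quotient) : Submodule Rᵐᵒᵖ R where
  carrier := {r : R | (r : c.Quotient) ∈ A'}
  add_mem' := fun {a b} ha hb => by
    show ((a + b : R) : c.Quotient) ∈ A'
    rw [RingCon.coe_add]
    exact A'.add_mem ha hb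
  zero_mem' := by
    show ((0 : R) : c.Quotient) ∈ A'
    exact A'.zero_mem
  smul_mem' := fun r x hx => by
    show ((x * r.unop : R) : c.Quotient) ∈ A'
    rw [RingCon.coe_mul]
    simpa [op_smul_eq_mul] using A'.smul_mem (op ((r.unop : R) : c.Quotient)) hx

theorem chainRing_of_uniserial {K : Submodule Rᵐᵒᵖ R} (hK : IsTwoSidedRid K)
    (hu : IsUniserialMod Rᵐᵒᵖ (R ⧸ K)) :
    ∀ A' B' : Submodule (ridCon K hK).Quotientᵐᵒᵖ (ridCon K hK).Quotient,
      A' ≤ B' ∨ B' ≤ A' := by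
  intro A' B'
  have hle : ∀ C' : Submodule (ridCon K hK).Quotientᵐᵒᵖ (ridCon K hK).Quotient,
      K ≤ pullSub (ridCon K hK) C' := by
    intro C' x hx
    show ((x : R) : (ridCon K hK).Quotient) ∈ C'
    rw [ridCon_coe_zero hK hx]
    exact C'.zero_mem
  have key : ∀ C' D' : Submodule (ridCon K hK).Quotientᵐᵒᵖ (ridCon K hK).Quotient,
      pullSub (ridCon K hK) C' ≤ pullSub (ridCon K hK) D' → C' ≤ D' := by
    intro C' D' h q hq
    obtain ⟨r, rfl⟩ := Quotient.exists_rep q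
    exact h (show ((r : R) : (ridCon K hK).Quotient) ∈ C' from hq)
  rcases interval_chain hu (hle A') (hle B') with h | h
  · exact Or.inl (key _ _ h)
  · exact Or.inr (key _ _ h)

theorem exists_ringEquiv {n : ℕ} {F : Fin n → Submodule Rᵐᵒᵖ R} (hF : Coindep F)
    (hts : ∀ i, IsTwoSidedRid (F i)) (htsA : IsTwoSidedRid (⨅ i, F i)) :
    ∃ e : (ridCon (⨅ i, F i) htsA).Quotient ≃+*
        ((i : Fin n) → (ridCon (F i) (hts i)).Quotient),
      ∀ r : R, e (r : (ridCon (⨅ i, F i) htsA).Quotient)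
        = fun i => (r : (ridCon (F i) (hts i)).Quotient) := by
  classical
  let φ : R →+* ((i : Fin n) → (ridCon (F i) (hts i)).Quotient) :=
    Pi.ringHom fun i => (ridCon (F i) (hts i)).mk'
  have hker : ∀ a b : R, (ridCon (⨅ i, F i) htsA) a b ↔ φ a = φ b := by
    intro a b
    rw [funext_iff]
    constructor
    · intro h i
      exact (RingCon.eq _).2
        (show a - b ∈ F i from (Submodule.mem_iInf _).1 (show a - b ∈ ⨅ i, F i from h) i)
    · intro h
      show a - b ∈ ⨅ i, F i
      rw [Submodule.mem_iInf]
      intro i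
      exact (RingCon.eq _).1 (h i)
  have hsurj : Function.Surjective φ := by
    intro y
    have hrep : ∀ i, ∃ r : R, (r : (ridCon (F i) (hts i)).Quotient) = y i := by
      intro i
      obtain ⟨r, hr⟩ := Quotient.exists_rep (y i)
      exact ⟨r, hr⟩
    choose r hr using hrep
    choose f hf e he hfe using coindep_decomp hF
    refine ⟨∑ k, e k * r k, funext fun i => ?_⟩
    rw [← hr i]
    refine (RingCon.eq _).2 (show (∑ k, e k * r k) - r i ∈ F i from ?_)
    have hsplit : (∑ k, e k * r k) - r i
        = (e i - 1) * r i + ∑ k ∈ Finset.univ.erase i, e k * r k := by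
      rw [← Finset.add_sum_erase _ (fun k => e k * r k) (Finset.mem_univ i), sub_mul, one_mul]
      abel
    rw [hsplit]
    refine Submodule.add_mem _ ?_ (Submodule.sum_mem _ fun k hk => ?_)
    · have : e i - 1 = -(f i) := by rw [← hfe i]; abel
      rw [this]
      simpa [op_smul_eq_mul] using (F i).smul_mem (op (r i)) ((F i).neg_mem (hf i))
    · have hki : k ≠ i := (Finset.mem_erase.1 hk).1
      have hek : e k ∈ F i := by
        have := he k
        simp only [Submodule.mem_iInf] at this
        exact this i (fun h => hki h.symm)
      simpa [op_smul_eq_mul] using (F i).smul_mem (op (r k)) hek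
  let ψ : (ridCon (⨅ i, F i) htsA).Quotient →+*
      ((i : Fin n) → (ridCon (F i) (hts i)).Quotient) :=
    { toFun := fun q => Quotient.liftOn' q φ fun a b h => (hker a b).1 h
      map_one' := map_one φ
      map_zero' := map_zero φ
      map_mul' := fun x y => Quotient.inductionOn₂' x y fun a b => map_mul φ a b
      map_add' := fun x y => Quotient.inductionOn₂' x y fun a b => map_add φ a b }
  have hψinj : Function.Injective ψ := by
    intro x y
    refine Quotient.inductionOn₂' x y fun a b h => ?_
    exact Quotient.sound' ((hker a b).2 h)
  have hψsurj : Function.Surjective ψ := by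
    intro y
    obtain ⟨r, hr⟩ := hsurj y
    exact ⟨(r : (ridCon (⨅ i, F i) htsA).Quotient), hr⟩
  exact ⟨RingEquiv.ofBijective ψ ⟨hψinj, hψsurj⟩, fun r => rfl⟩


/-- Theorem: uniqueness of serial factorizations, and when `n ≥ 2` all factors and `A` are
two-sided, the canonical map `r + A ↦ (r + A₁, …, r + Aₙ)` is a ring isomorphism
`R/A → R/A₁ × ⋯ × R/Aₙ`, and every `R/Aᵢ` is a right chain ring. -/
theorem statement5 {R : Type u} [Ring R] [Nontrivial R] {n m : ℕ}
    (A : Submodule Rᵐᵒᵖ R)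
    (F : Fin n → Submodule Rᵐᵒᵖ R) (G : Fin m → Submodule Rᵐᵒᵖ R)
    (hF : IsSerialFact A F) (hG : IsSerialFact A G) :
    n = m ∧ (∃! σ : Fin n ≃ Fin m, ∀ i, F i = G (σ i)) ∧
      (2 ≤ n →
        (∀ i, IsTwoSidedRid (F i)) ∧ IsTwoSidedRid A ∧
          ∃ (c : RingCon R) (d : Fin n → RingCon R),
            (∀ r s : R, c r s ↔ r - s ∈ A) ∧
            (∀ i (r s : R), d i r s ↔ r - s ∈ F i) ∧
            (∀ i, IsRightChainRing (d i).Quotient) ∧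
            ∃ e : c.Quotient ≃+* ((i : Fin n) → (d i).Quotient),
              ∀ r : R, e (r : c.Quotient) = fun i => (r : (d i).Quotient)) := by
  obtain ⟨hFp, hFcomm, hFc, hFu, hFeq⟩ := hF
  obtain ⟨hGp, hGcomm, hGc, hGu, hGeq⟩ := hG
  have hFA : A = ⨅ i, F i := hFeq.trans (rprod_eq_iInf hFc hFcomm)
  have hGA : A = ⨅ j, G j := hGeq.trans (rprod_eq_iInf hGc hGcomm)
  have hinf : (⨅ i, F i) = ⨅ j, G j := hFA.symm.trans hGA
  have hm1 := factor_matches hFp hFc hFu hGp hGc hGcomm hGu hinf hFcomm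
  have hm2 := factor_matches hGp hGc hGu hFp hFc hFcomm hFu hinf.symm hGcomm
  choose js hjs using hm1
  have hinj : Function.Injective js := fun i i' h =>
    coindep_inj hFc hFp (by rw [hjs i, hjs i', h])
  have hsurj : Function.Surjective js := fun j => by
    obtain ⟨i, hi⟩ := hm2 j
    exact ⟨i, coindep_inj hGc hGp (by rw [← hjs i, ← hi])⟩
  let σ : Fin n ≃ Fin m := Equiv.ofBijective js ⟨hinj, hsurj⟩
  refine ⟨by simpa using Fintype.card_congr σ, ⟨σ, fun i => hjs i, ?_⟩, ?_⟩
  · intro τ hτ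
    apply Equiv.ext
    intro i
    exact coindep_inj hGc hGp ((hτ i).symm.trans (hjs i))
  · intro hn
    subst hFA
    have hts : ∀ i, IsTwoSidedRid (F i) := coindep_twoSided hn hFc hFcomm
    have htsA : IsTwoSidedRid (⨅ i, F i) := twoSided_inf hts
    exact ⟨hts, htsA, ridCon _ htsA, fun i => ridCon (F i) (hts i),
      fun r s => Iff.rfl, fun i r s => Iff.rfl,
      fun i => chainRing_of_uniserial (hts i) (hFu i),
      exists_ringEquiv hFc hts htsA⟩
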